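/- (GCE unbiasedness for the per-group loss) Let Z be a nonempty finite set partitioned into nonempty groups S_1, …, S_p, let f : Z → ℝ, and let m ≥ 1. Define the target loss F = (1/p) Σ_{k=1}^p (1/|S_k|) Σ_{z ∈ S_k} f(z). Draw a batch x uniformly at random from Z^m, and define the categorical gradient estimator F̂(x) = (1/p) Σ_{k=1}^p A_k(x), where A_k(x) is the average of f over the coordinates of x lying in S_k if at least one coordinate lies in S_k, and 0 otherwise. Then 𝔼[F̂(x)] = (1/p) Σ_{k=1}^p P₁(k) · (1/|S_k|) Σ_{z ∈ S_k} f(z), where P₁(k) = 1 − ((|Z| − |S_k|)/|Z|)^m; in particular, for each group k the conditional expectation of A_k(x) given that the batch contains at least one element of S_k equals (1/|S_k|) Σ_{z ∈ S_k} f(z), the k-th term of F times p. -/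

import Mathlib

open Finset

/-- The number of coordinates of the batch `x : Z^m` that lie in the group `S`. -/
def hitCount {Z : Type*} [DecidableEq Z] (S : Finset Z) {m : ℕ} (x : Fin m → Z) : ℕ :=
  (Finset.univ.filter fun i => x i ∈ S).card

/-- `A_k(x)`: the average of `f` over the coordinates of `x` lying in the group `S` if at
least one coordinate lies in `S`, and `0` otherwise. -/
noncomputable def groupAvg {Z : Type*} [DecidableEq Z] (S : Finset Z) (f : Z → ℝ)
    {m : ℕ} (x : Fin m → Z) : ℝ :=
  if h : 0 < hitCount S x then
    (∑ i ∈ Finset.univ.filter fun i => x i ∈ S, f (x i)) / (hitCount S x : ℝ)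
  else 0

section aux
variable {Z : Type*} [Fintype Z] [DecidableEq Z]

lemma sum_piFinset_apply {m : ℕ} (t : Fin m → Finset Z) (g : Z → ℝ) (i0 : Fin m) :
    ∑ x ∈ Fintype.piFinset t, g (x i0)
      = (∏ j ∈ Finset.univ.erase i0, ((t j).card : ℝ)) * ∑ z ∈ t i0, g z := by
  classical
  calc ∑ x ∈ Fintype.piFinset t, g (x i0)
      = ∑ x ∈ Fintype.piFinset t, ∏ j : Fin m, (if j = i0 then g (x j) else 1) := by
        refine Finset.sum_congr rfl fun x _ => ?_
        simp
    _ = ∏ j : Fin m, ∑ z ∈ t j, (if j = i0 then g z else 1) :=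
        (Finset.prod_univ_sum t (fun j z => if j = i0 then g z else 1)).symm
    _ = (∑ z ∈ t i0, (if i0 = i0 then g z else 1))
          * ∏ j ∈ Finset.univ.erase i0, ∑ z ∈ t j, (if j = i0 then g z else 1) :=
        (Finset.mul_prod_erase Finset.univ _ (Finset.mem_univ i0)).symm
    _ = _ := by
        rw [mul_comm]
        congr 1
        · refine Finset.prod_congr rfl fun j hj => ?_
          have hne : j ≠ i0 := Finset.ne_of_mem_erase hj
          simp [hne]
        · simp

lemma filterPattern_eq (S : Finset Z) {m : ℕ} (T : Finset (Fin m)) :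
    Finset.univ.filter (fun x : Fin m → Z => (Finset.univ.filter fun i => x i ∈ S) = T)
      = Fintype.piFinset (fun i => if i ∈ T then S else Sᶜ) := by
  ext x
  simp only [Finset.mem_filter, Finset.mem_univ, true_and, Fintype.mem_piFinset,
    Finset.ext_iff]
  refine forall_congr' fun i => ?_
  by_cases hi : i ∈ T <;> simp [hi]


lemma fiber_sum {m : ℕ} (S : Finset Z) (hS : S.Nonempty) (f : Z → ℝ)
    (T : Finset (Fin m)) (hT : T.Nonempty) :
    ∑ x ∈ Finset.univ.filter (fun x : Fin m → Z =>
          (Finset.univ.filter fun i => x i ∈ S) = T), groupAvg S f x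
      = ((Finset.univ.filter (fun x : Fin m → Z =>
            (Finset.univ.filter fun i => x i ∈ S) = T)).card : ℝ)
          * ((∑ z ∈ S, f z) / (S.card : ℝ)) := by
  classical
  have hS0 : (S.card : ℝ) ≠ 0 := Nat.cast_ne_zero.mpr hS.card_pos.ne'
  have hT0 : (T.card : ℝ) ≠ 0 := Nat.cast_ne_zero.mpr hT.card_pos.ne'
  set t : Fin m → Finset Z := fun i => if i ∈ T then S else Sᶜ with ht
  rw [filterPattern_eq S T]
  have step1 : ∀ x ∈ Fintype.piFinset t, groupAvg S f x
      = (∑ i ∈ T, f (x i)) / (T.card : ℝ) := by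
    intro x hx
    have hpat : (Finset.univ.filter fun i => x i ∈ S) = T := by
      have := (filterPattern_eq S T (Z := Z)).symm ▸ hx
      simpa using (Finset.mem_filter.mp this).2
    simp only [groupAvg, hitCount, hpat]
    rw [dif_pos hT.card_pos]
  rw [Finset.sum_congr rfl step1, ← Finset.sum_div, Finset.sum_comm]
  have key : ∀ i ∈ T, (∑ x ∈ Fintype.piFinset t, f (x i))
      = ((Fintype.piFinset t).card : ℝ) * ((∑ z ∈ S, f z) / (S.card : ℝ)) := by
    intro i hi
    rw [sum_piFinset_apply]
    have hti : t i = S := if_pos hi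
    have hprod : ((t i).card : ℝ) * ∏ j ∈ Finset.univ.erase i, ((t j).card : ℝ)
        = ((Fintype.piFinset t).card : ℝ) := by
      rw [Fintype.card_piFinset]
      push_cast
      exact Finset.mul_prod_erase Finset.univ (fun j => ((t j).card : ℝ)) (Finset.mem_univ i)
    rw [hti] at hprod ⊢
    have hpe : (∏ j ∈ Finset.univ.erase i, ((t j).card : ℝ))
        = ((Fintype.piFinset t).card : ℝ) / (S.card : ℝ) := by
      rw [eq_div_iff hS0, ← hprod]; ring
    rw [hpe]; ring
  rw [Finset.sum_congr rfl key, Finset.sum_const, nsmul_eq_mul, ← ht]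
  field_simp

lemma fiber_sum_empty {m : ℕ} (S : Finset Z) (f : Z → ℝ) :
    ∑ x ∈ Finset.univ.filter (fun x : Fin m → Z =>
          (Finset.univ.filter fun i => x i ∈ S) = (∅ : Finset (Fin m))), groupAvg S f x = 0 := by
  refine Finset.sum_eq_zero fun x hx => ?_
  have hpat := (Finset.mem_filter.mp hx).2
  have : hitCount S x = 0 := by rw [hitCount, hpat]; simp
  simp [groupAvg, this]

lemma filter_inter_pattern {m : ℕ} (S : Finset Z) (T : Finset (Fin m)) (hT : T.Nonempty) :
    (Finset.univ.filter fun x : Fin m → Z => 1 ≤ hitCount S x).filter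
        (fun x => (Finset.univ.filter fun i => x i ∈ S) = T)
      = Finset.univ.filter (fun x : Fin m → Z => (Finset.univ.filter fun i => x i ∈ S) = T) := by
  rw [Finset.filter_filter]
  refine Finset.filter_congr fun x _ => ?_
  constructor
  · exact fun h => h.2
  · intro h
    refine ⟨?_, h⟩
    rw [hitCount, h]
    exact hT.card_pos

lemma sum_groupAvg {m : ℕ} (S : Finset Z) (hS : S.Nonempty) (f : Z → ℝ) :
    ∑ x : Fin m → Z, groupAvg S f x
      = ((Finset.univ.filter fun x : Fin m → Z => 1 ≤ hitCount S x).card : ℝ)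
          * ((∑ z ∈ S, f z) / (S.card : ℝ)) := by
  classical
  rw [← Finset.sum_fiberwise Finset.univ
      (fun x : Fin m → Z => Finset.univ.filter fun i => x i ∈ S) (groupAvg S f)]
  rw [Finset.card_eq_sum_card_fiberwise
      (f := fun x : Fin m → Z => Finset.univ.filter fun i => x i ∈ S)
      (t := Finset.univ) (fun x _ => Finset.mem_univ _)]
  push_cast
  rw [Finset.sum_mul]
  refine Finset.sum_congr rfl fun T _ => ?_
  rcases T.eq_empty_or_nonempty with hTe | hT
  · subst hTe
    rw [fiber_sum_empty]
    have : (Finset.univ.filter fun x : Fin m → Z => 1 ≤ hitCount S x).filter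
        (fun x => (Finset.univ.filter fun i => x i ∈ S) = (∅ : Finset (Fin m))) = ∅ := by
      refine Finset.filter_eq_empty_iff.mpr fun x hx => ?_
      have h1 := (Finset.mem_filter.mp hx).2
      intro hpat
      rw [hitCount, hpat] at h1
      simp at h1
    rw [this]
    simp
  · rw [filter_inter_pattern S T hT, fiber_sum S hS f T hT]

lemma card_filter_hit {m : ℕ} (S : Finset Z) :
    (Finset.univ.filter fun x : Fin m → Z => 1 ≤ hitCount S x).card
      = Fintype.card Z ^ m - (Fintype.card Z - S.card) ^ m := by
  classical
  have hcompl : (Finset.univ.filter fun x : Fin m → Z => ¬ 1 ≤ hitCount S x).card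
      = (Fintype.card Z - S.card) ^ m := by
    have heq : (Finset.univ.filter fun x : Fin m → Z => ¬ 1 ≤ hitCount S x)
        = Finset.univ.filter (fun x : Fin m → Z =>
            (Finset.univ.filter fun i => x i ∈ S) = (∅ : Finset (Fin m))) := by
      refine Finset.filter_congr fun x _ => ?_
      rw [not_le, Nat.lt_one_iff, hitCount, Finset.card_eq_zero]
    rw [heq, filterPattern_eq]
    rw [Fintype.card_piFinset]
    simp [Finset.card_compl]
  have htot := Finset.card_filter_add_card_filter_not
      (s := (Finset.univ : Finset (Fin m → Z)))
      (p := fun x : Fin m → Z => 1 ≤ hitCount S x)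
  rw [hcompl] at htot
  have hcard : (Finset.univ : Finset (Fin m → Z)).card = Fintype.card Z ^ m := by
    simp [Finset.card_univ]
  omega

end aux

/-- **GCE unbiasedness for the per-group loss.** Let `Z` be a nonempty
finite set partitioned into nonempty groups `S 1, …, S p`, `f : Z → ℝ` and `m ≥ 1`.
For a uniform batch `x ∈ Z^m` and `F̂(x) = (1/p) Σ_k A_k(x)`, we have
`𝔼[F̂] = (1/p) Σ_k P₁(k) · (1/|S k|) Σ_{z ∈ S k} f z` with
`P₁(k) = 1 - ((|Z| - |S k|)/|Z|)^m`; moreover for each group `k` the conditional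
expectation of `A_k(x)` given that the batch contains at least one element of `S k`
equals `(1/|S k|) Σ_{z ∈ S k} f z`. -/
theorem gce_unbiasedness_per_group_loss
    {Z : Type*} [Fintype Z] [DecidableEq Z] [Nonempty Z] {p : ℕ}
    (S : Fin p → Finset Z)
    (hne : ∀ k, (S k).Nonempty)
    (hdisj : ∀ i j, i ≠ j → Disjoint (S i) (S j))
    (hcover : ∀ z : Z, ∃ i, z ∈ S i)
    (f : Z → ℝ) (m : ℕ) (hm : 1 ≤ m) :
    ((∑ x : Fin m → Z, (1 / (p : ℝ)) * ∑ k, groupAvg (S k) f x)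
        / (Fintype.card (Fin m → Z) : ℝ)
      = (1 / (p : ℝ)) * ∑ k,
          (1 - (((Fintype.card Z : ℝ) - ((S k).card : ℝ)) / (Fintype.card Z : ℝ)) ^ m)
            * ((∑ z ∈ S k, f z) / ((S k).card : ℝ))) ∧
    (∀ k,
      (∑ x ∈ Finset.univ.filter (fun x : Fin m → Z => 1 ≤ hitCount (S k) x),
          groupAvg (S k) f x)
          / ((Finset.univ.filter fun x : Fin m → Z => 1 ≤ hitCount (S k) x).card : ℝ)
        = (∑ z ∈ S k, f z) / ((S k).card : ℝ)) := by
  classical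
  have hZpos : 0 < Fintype.card Z := Fintype.card_pos
  have hZ0 : ((Fintype.card Z : ℝ)) ≠ 0 := Nat.cast_ne_zero.mpr hZpos.ne'
  have hD : (Fintype.card (Fin m → Z) : ℝ) = (Fintype.card Z : ℝ) ^ m := by
    rw [Fintype.card_fun]
    push_cast
    simp
  constructor
  · rw [← Finset.mul_sum, mul_div_assoc]
    congr 1
    rw [Finset.sum_comm, Finset.sum_div]
    refine Finset.sum_congr rfl fun k _ => ?_
    rw [sum_groupAvg (S k) (hne k) f, card_filter_hit, hD]
    have hsle : (S k).card ≤ Fintype.card Z := Finset.card_le_univ _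
    have hple : (Fintype.card Z - (S k).card) ^ m ≤ Fintype.card Z ^ m :=
      Nat.pow_le_pow_left (Nat.sub_le _ _) m
    have hS0 : ((S k).card : ℝ) ≠ 0 := Nat.cast_ne_zero.mpr (hne k).card_pos.ne'
    rw [Nat.cast_sub hple]
    push_cast [Nat.cast_sub hsle]
    rw [div_pow]
    field_simp
  · intro k
    have hfe : (∑ x ∈ Finset.univ.filter (fun x : Fin m → Z => 1 ≤ hitCount (S k) x),
        groupAvg (S k) f x) = ∑ x : Fin m → Z, groupAvg (S k) f x := by
      refine Finset.sum_filter_of_ne fun x _ hx => ?_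
      by_contra h
      have h0 : ¬ 0 < hitCount (S k) x := by omega
      exact hx (by simp [groupAvg, h0])
    rw [hfe, sum_groupAvg (S k) (hne k) f]
    have hpos : 0 < (Finset.univ.filter fun x : Fin m → Z => 1 ≤ hitCount (S k) x).card := by
      obtain ⟨z0, hz0⟩ := hne k
      refine Finset.card_pos.mpr ⟨fun _ => z0, ?_⟩
      refine Finset.mem_filter.mpr ⟨Finset.mem_univ _, ?_⟩
      simpa [hitCount, hz0] using hm
    exact mul_div_cancel_left₀ _ (Nat.cast_ne_zero.mpr hpos.ne')
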